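/- arXiv:2203.13514 — 2 statements merged into one kernel-verified Lean document; each statement's English description precedes it below -/
import Mathlib

section
/- Let E be a finite-dimensional real inner product space, f : E → ℝ any function, and a₁, a₂, a₃, a₄ ∈ E affinely independent. Let ā₁ be the reflection of a₁ across the affine span of {a₂, a₃, a₄}, let ā₂ be the reflection of a₂ across the affine span of {a₃, a₄}, and set r̄ = ((f(ā₁) − f(a₁))/‖ā₁ − a₁‖²) • (ā₁ − a₁) + ((f(ā₂) − f(a₂))/‖ā₂ − a₂‖²) • (ā₂ − a₂) + ((f(a₄) − f(a₃))/‖a₄ − a₃‖²) • (a₄ − a₃). Then in the Clifford algebra of the quadratic form Q(v) = ⟪v,v⟫ on E one has (f(ā₁) − f(a₁)) • ι(ā₂ − a₂) * ι(a₄ − a₃) − (f(ā₂) − f(a₂)) • ι(ā₁ − a₁) * ι(a₄ − a₃) + (f(a₄) − f(a₃)) • ι(ā₁ − a₁) * ι(ā₂ − a₂) = ι(r̄) * ι(ā₁ − a₁) * ι(ā₂ − a₂) * ι(a₄ − a₃). -/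
open EuclideanGeometry CliffordAlgebra
open scoped InnerProductSpace

/-- Orthogonal reflection of the point `p` across the affine span of the set `s`
(Mathlib's `EuclideanGeometry.reflection`), extended by the identity if `s` is empty. -/
noncomputable def mirror {E : Type*} [NormedAddCommGroup E] [InnerProductSpace ℝ E]
    [FiniteDimensional ℝ E] (s : Set E) (p : E) : E :=
  open scoped Classical in
  if hs : s.Nonempty then
    haveI : Nonempty (affineSpan ℝ s) := ((affineSpan_nonempty ℝ (s := s)).mpr hs).to_subtype
    EuclideanGeometry.reflection (affineSpan ℝ s) p
  else p

/-- The quadratic form `v ↦ ⟪v, v⟫` of a real inner product space. -/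
noncomputable def Qf (E : Type*) [NormedAddCommGroup E] [InnerProductSpace ℝ E] :
    QuadraticForm ℝ E :=
  LinearMap.BilinMap.toQuadraticMap (innerₗ E)

lemma Qf_apply {E : Type*} [NormedAddCommGroup E] [InnerProductSpace ℝ E] (u : E) :
    Qf E u = ‖u‖ ^ 2 := by
  simp [Qf, LinearMap.BilinMap.toQuadraticMap_apply, innerₗ_apply_apply,
    real_inner_self_eq_norm_sq]

lemma Qf_isOrtho {E : Type*} [NormedAddCommGroup E] [InnerProductSpace ℝ E] {u v : E}
    (h : ⟪u, v⟫_ℝ = 0) : (Qf E).IsOrtho u v := by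
  have h' : ⟪v, u⟫_ℝ = 0 := by rw [real_inner_comm]; exact h
  rw [QuadraticMap.isOrtho_def]
  simp only [Qf_apply, ← real_inner_self_eq_norm_sq, inner_add_add_self, h, h']
  ring

lemma clifford_key {E : Type*} [NormedAddCommGroup E] [InnerProductSpace ℝ E]
    (u v w : E) (huv : ⟪u, v⟫_ℝ = 0) (huw : ⟪u, w⟫_ℝ = 0) (hvw : ⟪v, w⟫_ℝ = 0)
    (hu : u ≠ 0) (hv : v ≠ 0) (hw : w ≠ 0) (c₁ c₂ c₃ : ℝ) :
    c₁ • (ι (Qf E) v * ι (Qf E) w) - c₂ • (ι (Qf E) u * ι (Qf E) w)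
      + c₃ • (ι (Qf E) u * ι (Qf E) v) =
    ι (Qf E) ((c₁ / ‖u‖ ^ 2) • u + (c₂ / ‖v‖ ^ 2) • v + (c₃ / ‖w‖ ^ 2) • w)
      * ι (Qf E) u * ι (Qf E) v * ι (Qf E) w := by
  have hnu : ‖u‖ ^ 2 ≠ 0 := pow_ne_zero _ (norm_ne_zero_iff.2 hu)
  have hnv : ‖v‖ ^ 2 ≠ 0 := pow_ne_zero _ (norm_ne_zero_iff.2 hv)
  have hnw : ‖w‖ ^ 2 ≠ 0 := pow_ne_zero _ (norm_ne_zero_iff.2 hw)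
  have hsqu : ι (Qf E) u * ι (Qf E) u = algebraMap ℝ _ (‖u‖ ^ 2) := by
    rw [ι_sq_scalar, Qf_apply]
  have hsqv : ι (Qf E) v * ι (Qf E) v = algebraMap ℝ _ (‖v‖ ^ 2) := by
    rw [ι_sq_scalar, Qf_apply]
  have hsqw : ι (Qf E) w * ι (Qf E) w = algebraMap ℝ _ (‖w‖ ^ 2) := by
    rw [ι_sq_scalar, Qf_apply]
  have hvu : ι (Qf E) v * ι (Qf E) u = -(ι (Qf E) u * ι (Qf E) v) :=
    ι_mul_ι_comm_of_isOrtho (Qf_isOrtho huv).symm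
  have hwu : ι (Qf E) w * ι (Qf E) u = -(ι (Qf E) u * ι (Qf E) w) :=
    ι_mul_ι_comm_of_isOrtho (Qf_isOrtho huw).symm
  have hwv : ι (Qf E) w * ι (Qf E) v = -(ι (Qf E) v * ι (Qf E) w) :=
    ι_mul_ι_comm_of_isOrtho (Qf_isOrtho hvw).symm
  simp only [map_add, map_smul, add_mul, smul_mul_assoc, mul_assoc]
  have h1 : ι (Qf E) u * (ι (Qf E) u * (ι (Qf E) v * ι (Qf E) w))
      = (‖u‖ ^ 2 : ℝ) • (ι (Qf E) v * ι (Qf E) w) := by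
    rw [← mul_assoc, hsqu, ← Algebra.smul_def]
  have h2 : ι (Qf E) v * (ι (Qf E) u * (ι (Qf E) v * ι (Qf E) w))
      = -((‖v‖ ^ 2 : ℝ) • (ι (Qf E) u * ι (Qf E) w)) := by
    rw [← mul_assoc, ← mul_assoc, hvu, neg_mul, mul_assoc, hsqv, ← Algebra.commutes,
      ← Algebra.smul_def, neg_mul, smul_mul_assoc]
  have h3 : ι (Qf E) w * (ι (Qf E) u * (ι (Qf E) v * ι (Qf E) w))
      = (‖w‖ ^ 2 : ℝ) • (ι (Qf E) u * ι (Qf E) v) := by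
    rw [← mul_assoc, hwu, neg_mul, mul_assoc, ← mul_assoc (ι (Qf E) w), hwv, neg_mul, mul_neg,
      neg_neg, mul_assoc, hsqw, ← Algebra.commutes, ← Algebra.smul_def, mul_smul_comm]
  rw [h1, h2, h3, smul_smul, smul_neg, smul_smul, smul_smul, div_mul_cancel₀ _ hnu,
    div_mul_cancel₀ _ hnv, div_mul_cancel₀ _ hnw]
  abel

lemma reflection_sub_mem_orthogonal {E : Type*} [NormedAddCommGroup E] [InnerProductSpace ℝ E]
    [FiniteDimensional ℝ E] (s : AffineSubspace ℝ E) [Nonempty s] (p : E) :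
    EuclideanGeometry.reflection s p - p ∈ s.directionᗮ := by
  rw [EuclideanGeometry.reflection_apply']
  have hm := vsub_orthogonalProjection_mem_direction_orthogonal s p
  have : ((↑(EuclideanGeometry.orthogonalProjection s p) -ᵥ p) +ᵥ
      (EuclideanGeometry.orthogonalProjection s p : E)) - p
      = (-2 : ℝ) • (p -ᵥ (EuclideanGeometry.orthogonalProjection s p : E)) := by
    simp only [vsub_eq_sub, vadd_eq_add]
    module
  rw [this]
  exact Submodule.smul_mem _ _ hm

/-- For affinely independent `a₁, a₂, a₃, a₄` in a finite-dimensional real inner product space,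
with `ā₁` the reflection of `a₁` across the affine span of `{a₂, a₃, a₄}`, `ā₂` the reflection
of `a₂` across the affine span of `{a₃, a₄}`, and `r̄` the mean multi-difference quotient vector,
the mean multi-difference pseudo-vector equals the geometric product of `r̄` with the
pseudo-scalar `(ā₁ − a₁)(ā₂ − a₂)(a₄ − a₃)` in the Clifford algebra of `Q(v) = ⟪v, v⟫`. -/
theorem mean_multi_difference_eq_clifford_product_dim3
    {E : Type*} [NormedAddCommGroup E] [InnerProductSpace ℝ E] [FiniteDimensional ℝ E]
    (f : E → ℝ) (a₁ a₂ a₃ a₄ : E) (h : AffineIndependent ℝ ![a₁, a₂, a₃, a₄]) :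
    (f (mirror {a₂, a₃, a₄} a₁) - f a₁) •
          (ι (Qf E) (mirror {a₃, a₄} a₂ - a₂) * ι (Qf E) (a₄ - a₃)) -
        (f (mirror {a₃, a₄} a₂) - f a₂) •
          (ι (Qf E) (mirror {a₂, a₃, a₄} a₁ - a₁) * ι (Qf E) (a₄ - a₃)) +
        (f a₄ - f a₃) •
          (ι (Qf E) (mirror {a₂, a₃, a₄} a₁ - a₁) * ι (Qf E) (mirror {a₃, a₄} a₂ - a₂)) =
      ι (Qf E) (((f (mirror {a₂, a₃, a₄} a₁) - f a₁) / ‖mirror {a₂, a₃, a₄} a₁ - a₁‖ ^ 2) •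
            (mirror {a₂, a₃, a₄} a₁ - a₁) +
          ((f (mirror {a₃, a₄} a₂) - f a₂) / ‖mirror {a₃, a₄} a₂ - a₂‖ ^ 2) •
            (mirror {a₃, a₄} a₂ - a₂) +
          ((f a₄ - f a₃) / ‖a₄ - a₃‖ ^ 2) • (a₄ - a₃)) *
        ι (Qf E) (mirror {a₂, a₃, a₄} a₁ - a₁) *
        ι (Qf E) (mirror {a₃, a₄} a₂ - a₂) * ι (Qf E) (a₄ - a₃) := by
  classical
  have hs1 : ({a₂, a₃, a₄} : Set E).Nonempty := ⟨a₂, by simp⟩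
  have hs2 : ({a₃, a₄} : Set E).Nonempty := ⟨a₃, by simp⟩
  haveI : Nonempty (affineSpan ℝ ({a₂, a₃, a₄} : Set E)) :=
    ((affineSpan_nonempty ℝ).mpr hs1).to_subtype
  haveI : Nonempty (affineSpan ℝ ({a₃, a₄} : Set E)) :=
    ((affineSpan_nonempty ℝ).mpr hs2).to_subtype
  have m1 : mirror {a₂, a₃, a₄} a₁ = reflection (affineSpan ℝ ({a₂, a₃, a₄} : Set E)) a₁ :=
    dif_pos hs1
  have m2 : mirror {a₃, a₄} a₂ = reflection (affineSpan ℝ ({a₃, a₄} : Set E)) a₂ :=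
    dif_pos hs2
  -- non-membership facts from affine independence
  have himg1 : (![a₁, a₂, a₃, a₄] '' ({1, 2, 3} : Set (Fin 4))) = {a₂, a₃, a₄} := by
    simp [Set.image_insert_eq]
  have himg2 : (![a₁, a₂, a₃, a₄] '' ({2, 3} : Set (Fin 4))) = {a₃, a₄} := by
    simp [Set.image_insert_eq]
  have ha1 : a₁ ∉ affineSpan ℝ ({a₂, a₃, a₄} : Set E) := by
    rw [← himg1]
    have := (h.mem_affineSpan_iff 0 ({1, 2, 3} : Set (Fin 4))).not.2 (by decide)
    simpa using this
  have ha2 : a₂ ∉ affineSpan ℝ ({a₃, a₄} : Set E) := by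
    rw [← himg2]
    have := (h.mem_affineSpan_iff 1 ({2, 3} : Set (Fin 4))).not.2 (by decide)
    simpa using this
  have ha34 : a₄ ≠ a₃ := by
    intro he
    have : (3 : Fin 4) = 2 := h.injective (by simpa using he)
    exact absurd this (by decide)
  -- the three vectors
  rw [m1, m2]
  set u := reflection (affineSpan ℝ ({a₂, a₃, a₄} : Set E)) a₁ - a₁ with hu_def
  set v := reflection (affineSpan ℝ ({a₃, a₄} : Set E)) a₂ - a₂ with hv_def
  -- memberships
  have hle : affineSpan ℝ ({a₃, a₄} : Set E) ≤ affineSpan ℝ ({a₂, a₃, a₄} : Set E) :=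
    affineSpan_mono ℝ (by intro x hx; simp only [Set.mem_insert_iff, Set.mem_singleton_iff] at hx ⊢; tauto)
  have ha2A : a₂ ∈ affineSpan ℝ ({a₂, a₃, a₄} : Set E) := mem_affineSpan ℝ (by simp)
  have ha3A : a₃ ∈ affineSpan ℝ ({a₂, a₃, a₄} : Set E) := mem_affineSpan ℝ (by simp)
  have ha4A : a₄ ∈ affineSpan ℝ ({a₂, a₃, a₄} : Set E) := mem_affineSpan ℝ (by simp)
  have ha3B : a₃ ∈ affineSpan ℝ ({a₃, a₄} : Set E) := mem_affineSpan ℝ (by simp)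
  have ha4B : a₄ ∈ affineSpan ℝ ({a₃, a₄} : Set E) := mem_affineSpan ℝ (by simp)
  have hu_orth : u ∈ (affineSpan ℝ ({a₂, a₃, a₄} : Set E)).directionᗮ :=
    reflection_sub_mem_orthogonal _ a₁
  have hv_orth : v ∈ (affineSpan ℝ ({a₃, a₄} : Set E)).directionᗮ :=
    reflection_sub_mem_orthogonal _ a₂
  have hv_mem : v ∈ (affineSpan ℝ ({a₂, a₃, a₄} : Set E)).direction := by
    have hr : reflection (affineSpan ℝ ({a₃, a₄} : Set E)) a₂
        ∈ affineSpan ℝ ({a₂, a₃, a₄} : Set E) :=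
      reflection_mem_of_le_of_mem hle ha2A
    exact AffineSubspace.vsub_mem_direction hr ha2A
  have hw_memA : a₄ - a₃ ∈ (affineSpan ℝ ({a₂, a₃, a₄} : Set E)).direction :=
    AffineSubspace.vsub_mem_direction ha4A ha3A
  have hw_memB : a₄ - a₃ ∈ (affineSpan ℝ ({a₃, a₄} : Set E)).direction :=
    AffineSubspace.vsub_mem_direction ha4B ha3B
  -- orthogonality
  have huv : ⟪u, v⟫_ℝ = 0 := by
    rw [real_inner_comm]; exact (Submodule.mem_orthogonal _ u).1 hu_orth v hv_mem
  have huw : ⟪u, a₄ - a₃⟫_ℝ = 0 := by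
    rw [real_inner_comm]; exact (Submodule.mem_orthogonal _ u).1 hu_orth _ hw_memA
  have hvw : ⟪v, a₄ - a₃⟫_ℝ = 0 := by
    rw [real_inner_comm]; exact (Submodule.mem_orthogonal _ v).1 hv_orth _ hw_memB
  -- nonvanishing
  have hu0 : u ≠ 0 := sub_ne_zero.2 fun he => ha1 ((EuclideanGeometry.reflection_eq_self_iff a₁).1 he)
  have hv0 : v ≠ 0 := sub_ne_zero.2 fun he => ha2 ((EuclideanGeometry.reflection_eq_self_iff a₂).1 he)
  have hw0 : a₄ - a₃ ≠ 0 := sub_ne_zero.2 ha34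
  exact clifford_key u v (a₄ - a₃) huv huw hvw hu0 hv0 hw0 _ _ _
end

section
/- Let n ≥ 2, let E be a finite-dimensional real inner product space, and let a₁, …, a_{n+1} ∈ E be affinely independent. For 1 ≤ i ≤ n−1 let āᵢ be the reflection of aᵢ across the affine span of a_{i+1}, …, a_{n+1}. Define vectors v₁, …, vₙ by vᵢ = āᵢ − aᵢ for 1 ≤ i ≤ n−1 and vₙ = a_{n+1} − aₙ. Then each vᵢ is nonzero and the vectors v₁, …, vₙ are pairwise orthogonal: ⟪vᵢ, vⱼ⟫ = 0 whenever i ≠ j. -/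
open EuclideanGeometry
open scoped InnerProductSpace

/-- Given points `a 0, …, a n` (the paper's `a₁, …, a_{n+1}`), `mirrored n a i` (for
`i : Fin (n-1)`, the paper's index `i+1 ∈ {1, …, n−1}`) is the reflection of the point `a i`
across the affine span of the points `a j`, `j > i`. -/
noncomputable def mirrored {E : Type*} [NormedAddCommGroup E] [InnerProductSpace ℝ E]
    [FiniteDimensional ℝ E] (n : ℕ) (a : Fin (n + 1) → E) (i : Fin (n - 1)) : E :=
  mirror (a '' {j | Fin.castLE (by omega) i < j}) (a (Fin.castLE (by omega) i))

section Aux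

variable {E : Type*} [NormedAddCommGroup E] [InnerProductSpace ℝ E] [FiniteDimensional ℝ E]

lemma mirror_eq_reflection (s : Set E) (hs : s.Nonempty) (p : E) :
    haveI : Nonempty (affineSpan ℝ s) := ((affineSpan_nonempty ℝ (s := s)).mpr hs).to_subtype
    mirror s p = EuclideanGeometry.reflection (affineSpan ℝ s) p := by
  simp only [mirror, dif_pos hs]

lemma mirror_sub_mem_orthogonal (s : Set E) (hs : s.Nonempty) (p : E) :
    mirror s p - p ∈ ((affineSpan ℝ s).direction)ᗮ := by
  haveI : Nonempty (affineSpan ℝ s) := ((affineSpan_nonempty ℝ (s := s)).mpr hs).to_subtype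
  rw [mirror_eq_reflection s hs p]
  have h1 : (↑(EuclideanGeometry.orthogonalProjection (affineSpan ℝ s) p) : E) - p
      ∈ ((affineSpan ℝ s).direction)ᗮ := by
    simpa [vsub_eq_sub] using
      EuclideanGeometry.orthogonalProjection_vsub_mem_direction_orthogonal (affineSpan ℝ s) p
  have h2 : EuclideanGeometry.reflection (affineSpan ℝ s) p - p
      = ((↑(EuclideanGeometry.orthogonalProjection (affineSpan ℝ s) p) : E) - p)
        + ((↑(EuclideanGeometry.orthogonalProjection (affineSpan ℝ s) p) : E) - p) := by
    rw [EuclideanGeometry.reflection_apply']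
    simp only [vsub_eq_sub, vadd_eq_add]
    abel
  rw [h2]
  exact Submodule.add_mem _ h1 h1

lemma mirror_mem (s : Set E) (hs : s.Nonempty) (p : E) (Q : AffineSubspace ℝ E)
    (hle : affineSpan ℝ s ≤ Q) (hp : p ∈ Q) : mirror s p ∈ Q := by
  haveI : Nonempty (affineSpan ℝ s) := ((affineSpan_nonempty ℝ (s := s)).mpr hs).to_subtype
  rw [mirror_eq_reflection s hs p, EuclideanGeometry.reflection_apply']
  have hproj : (↑(EuclideanGeometry.orthogonalProjection (affineSpan ℝ s) p) : E) ∈ Q :=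
    hle (EuclideanGeometry.orthogonalProjection_mem p)
  exact AffineSubspace.vadd_mem_of_mem_direction
    (AffineSubspace.vsub_mem_direction hproj hp) hproj

lemma mirror_ne (s : Set E) (hs : s.Nonempty) (p : E) (hp : p ∉ affineSpan ℝ s) :
    mirror s p ≠ p := by
  haveI : Nonempty (affineSpan ℝ s) := ((affineSpan_nonempty ℝ (s := s)).mpr hs).to_subtype
  rw [mirror_eq_reflection s hs p]
  intro h
  exact hp ((EuclideanGeometry.reflection_eq_self_iff p).mp h)

end Aux

/-- For affinely independent points `a 0, …, a n` (`n ≥ 2`) in a finite-dimensional real inner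
product space, the vectors `v i = āᵢ − aᵢ` (`1 ≤ i ≤ n−1`) and `v n = a_{n+1} − aₙ` are
nonzero and pairwise orthogonal (0-based indexing). -/
theorem mirrored_vectors_nonzero_and_pairwise_orthogonal
    {E : Type*} [NormedAddCommGroup E] [InnerProductSpace ℝ E] [FiniteDimensional ℝ E]
    (n : ℕ) (hn : 2 ≤ n) (a : Fin (n + 1) → E) (ha : AffineIndependent ℝ a) :
    let v : Fin n → E := fun i =>
      if h : (i : ℕ) < n - 1 then
        mirrored n a ⟨(i : ℕ), h⟩ - a (Fin.castLE (by omega) i)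
      else a (Fin.last n) - a ⟨n - 1, by omega⟩
    (∀ i, v i ≠ 0) ∧ ∀ i j, i ≠ j → ⟪v i, v j⟫_ℝ = 0 := by
  intro v
  have hc : ∀ i : Fin n, (i : ℕ) < n + 1 := fun i => by omega
  -- `c i` is the index `i` viewed in `Fin (n+1)`
  let c : Fin n → Fin (n + 1) := fun i => ⟨(i : ℕ), hc i⟩
  have hset : ∀ (i : Fin n) (h : (i : ℕ) < n - 1),
      mirrored n a ⟨(i : ℕ), h⟩ = mirror (a '' {j | c i < j}) (a (c i)) := fun i h => rfl
  have hSne : ∀ i : Fin n, (a '' {j | c i < j}).Nonempty := fun i =>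
    ⟨a (Fin.last n), Set.mem_image_of_mem a (show (i : ℕ) < n from i.isLt)⟩
  have hmemS : ∀ (i : Fin n) (k : Fin (n + 1)), c i < k →
      a k ∈ affineSpan ℝ (a '' {j | c i < j}) := fun i k hk =>
    subset_affineSpan ℝ _ (Set.mem_image_of_mem a hk)
  have hnotmem : ∀ i : Fin n, a (c i) ∉ affineSpan ℝ (a '' {j | c i < j}) := by
    intro i
    have := ha.notMem_affineSpan_diff (c i) {j | c i < j}
    rwa [Set.diff_singleton_eq_self (by simp [Set.mem_setOf_eq])] at this
  have hvform : ∀ (i : Fin n) (h : (i : ℕ) < n - 1),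
      v i = mirror (a '' {j | c i < j}) (a (c i)) - a (c i) := by
    intro i h
    show dite _ _ _ = _
    rw [dif_pos h, hset i h]
    rfl
  have hvform2 : ∀ (i : Fin n) (h : ¬ (i : ℕ) < n - 1),
      v i = a (Fin.last n) - a ⟨n - 1, by omega⟩ := by
    intro i h
    show dite _ _ _ = _
    rw [dif_neg h]
  -- `v j` lies in the direction of the span used for index `i`, whenever `i < j`
  have hvmem : ∀ i j : Fin n, i < j →
      v j ∈ (affineSpan ℝ (a '' {k | c i < k})).direction := by
    intro i j hij
    have hij' : (i : ℕ) < (j : ℕ) := hij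
    by_cases hj : (j : ℕ) < n - 1
    · rw [hvform j hj]
      have h1 : a (c j) ∈ affineSpan ℝ (a '' {k | c i < k}) :=
        hmemS i (c j) (show (i : ℕ) < (j : ℕ) from hij')
      have h2 : mirror (a '' {k | c j < k}) (a (c j)) ∈ affineSpan ℝ (a '' {k | c i < k}) := by
        refine mirror_mem _ (hSne j) _ _ ?_ h1
        refine affineSpan_mono ℝ (Set.image_mono (f := a) ?_)
        intro k hk
        exact lt_trans (show c i < c j from hij') hk
      simpa [vsub_eq_sub] using AffineSubspace.vsub_mem_direction h2 h1
    · rw [hvform2 j hj]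
      have h1 : a (Fin.last n) ∈ affineSpan ℝ (a '' {k | c i < k}) :=
        hmemS i (Fin.last n) (show (i : ℕ) < n from i.isLt)
      have h2 : a ⟨n - 1, by omega⟩ ∈ affineSpan ℝ (a '' {k | c i < k}) :=
        hmemS i ⟨n - 1, by omega⟩ (show (i : ℕ) < n - 1 by omega)
      simpa [vsub_eq_sub] using AffineSubspace.vsub_mem_direction h1 h2
  have key : ∀ i j : Fin n, i < j → ⟪v i, v j⟫_ℝ = 0 := by
    intro i j hij
    have hij' : (i : ℕ) < (j : ℕ) := hij
    have hi : (i : ℕ) < n - 1 := by have := j.isLt; omega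
    have hvi : v i ∈ ((affineSpan ℝ (a '' {k | c i < k})).direction)ᗮ := by
      rw [hvform i hi]
      exact mirror_sub_mem_orthogonal _ (hSne i) _
    exact (Submodule.mem_orthogonal' _ _).mp hvi _ (hvmem i j hij)
  constructor
  · intro i
    by_cases h : (i : ℕ) < n - 1
    · rw [hvform i h]
      exact sub_ne_zero.mpr (mirror_ne _ (hSne i) _ (hnotmem i))
    · rw [hvform2 i h]
      refine sub_ne_zero.mpr (ha.injective.ne ?_)
      refine Fin.ne_of_val_ne ?_
      show n ≠ n - 1
      omega
  · intro i j hij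
    rcases lt_or_gt_of_ne hij with h | h
    · exact key i j h
    · rw [real_inner_comm]
      exact key j i h
end
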